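/- arXiv:2110.11793 — 4 statements merged into one kernel-verified Lean document; each statement's English description precedes it below -/
import Mathlib

section
/- A point x̄ ∈ ℝⁿ with ‖x̄‖₀ ≤ s is a local minimizer of the sparsity constrained problem min f(x) s.t. ‖x‖₀ ≤ s only if ∂f/∂xᵢ(x̄) = 0 for all i with x̄ᵢ ≠ 0; that is, every local minimizer of SCNO is M-stationary. -/
/-- Every local minimizer of SCNO is M-stationary. -/
theorem scno_local_min_is_M_stationary (n s : ℕ) (hs : s < n)
    (f : (Fin n → ℝ) → ℝ) (hf : ContDiff ℝ 2 f)
    (xbar : Fin n → ℝ)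
    (hfeas : Set.ncard {i : Fin n | xbar i ≠ 0} ≤ s)
    (hmin : IsLocalMinOn f {x : Fin n → ℝ | Set.ncard {i : Fin n | x i ≠ 0} ≤ s} xbar) :
    ∀ i : Fin n, xbar i ≠ 0 → fderiv ℝ f xbar (Pi.single i 1) = 0 := by
  intro i hi
  set v : Fin n → ℝ := Pi.single i 1 with hv
  set g : ℝ → ℝ := fun t => f (xbar + t • v) with hg
  -- the curve t ↦ xbar + t • v stays feasible
  have hfeas' : ∀ t : ℝ, Set.ncard {j : Fin n | (xbar + t • v) j ≠ 0} ≤ s := by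
    intro t
    refine le_trans (Set.ncard_le_ncard ?_ (Set.toFinite _)) hfeas
    intro j hj
    by_cases hji : j = i
    · subst hji; exact hi
    · simp only [Set.mem_setOf_eq, Pi.add_apply, Pi.smul_apply, hv,
        Pi.single_eq_of_ne hji, smul_zero, add_zero] at hj ⊢
      exact hj
  -- the curve is continuous, so g has a local min at 0
  have hcurve : Continuous (fun t : ℝ => xbar + t • v) := by continuity
  have hcurve0 : (fun t : ℝ => xbar + t • v) 0 = xbar := by simp
  have hloc : IsLocalMin g 0 := by
    have := hmin
    rw [IsLocalMinOn, IsMinFilter] at this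
    have hmap : Filter.Tendsto (fun t : ℝ => xbar + t • v) (nhds 0)
        (nhdsWithin xbar {x : Fin n → ℝ | Set.ncard {i : Fin n | x i ≠ 0} ≤ s}) := by
      rw [nhdsWithin]
      refine Filter.tendsto_inf.2 ⟨?_, ?_⟩
      · simpa [hcurve0] using hcurve.tendsto 0
      · exact Filter.tendsto_principal.2 (Filter.Eventually.of_forall fun t => hfeas' t)
    have : ∀ᶠ t in nhds (0 : ℝ), f xbar ≤ f (xbar + t • v) := hmap.eventually this
    simpa [IsLocalMin, IsMinFilter, hg, hcurve0] using this
  -- derivative of g at 0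
  have hdiff : HasDerivAt g (fderiv ℝ f xbar v) 0 := by
    have h1 : HasDerivAt (fun t : ℝ => xbar + t • v) v 0 := by
      simpa using ((hasDerivAt_id (0 : ℝ)).smul_const v).const_add xbar
    have h2 : HasFDerivAt f (fderiv ℝ f xbar) ((fun t : ℝ => xbar + t • v) 0) := by
      rw [hcurve0]
      exact (hf.differentiable (by norm_num) xbar).hasFDerivAt
    exact h2.comp_hasDerivAt 0 h1
  have := hloc.deriv_eq_zero
  rwa [hdiff.deriv] at this
end

section
/- A point x̄ ∈ ℝⁿ is feasible for SCNO (i.e. ‖x̄‖₀ ≤ s) if and only if there exists ȳ ∈ [0,1]ⁿ with ∑ᵢ ȳᵢ ≥ n − s and x̄ᵢ·ȳᵢ = 0 for all i = 1,…,n. -/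
/-- SCNO feasibility is equivalent to existence of an auxiliary vector `y`
for the relaxed constraints. -/
theorem scno_feasible_iff_relaxation (n s : ℕ) (hs : s < n)
    (xbar : Fin n → ℝ) :
    Set.ncard {i : Fin n | xbar i ≠ 0} ≤ s ↔
      ∃ ybar : Fin n → ℝ,
        (∀ i, ybar i ∈ Set.Icc (0 : ℝ) 1) ∧
        (n : ℝ) - (s : ℝ) ≤ ∑ i, ybar i ∧
        ∀ i, xbar i * ybar i = 0 := by
  have hcard : {i : Fin n | xbar i ≠ 0}.ncard
      = (Finset.univ.filter (fun i => xbar i ≠ 0)).card := by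
    rw [Set.ncard_eq_toFinset_card']
    congr 1
    ext i
    simp
  have hsplit : (Finset.univ.filter (fun i => xbar i = 0)).card
      + (Finset.univ.filter (fun i => xbar i ≠ 0)).card = n := by
    simpa using Finset.card_filter_add_card_filter_not
      (s := (Finset.univ : Finset (Fin n))) (p := fun i => xbar i = 0)
  have hsum : ∑ i, (if xbar i = 0 then (1:ℝ) else 0)
      = (Finset.univ.filter (fun i => xbar i = 0)).card := by
    simp [Finset.sum_ite_eq, Finset.sum_boole]
  constructor
  · intro h
    refine ⟨fun i => if xbar i = 0 then 1 else 0, ?_, ?_, ?_⟩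
    · intro i; by_cases hi : xbar i = 0 <;> simp [hi]
    · rw [hsum]
      rw [hcard] at h
      have : (n : ℝ) = (Finset.univ.filter (fun i => xbar i = 0)).card
          + (Finset.univ.filter (fun i => xbar i ≠ 0)).card := by
        exact_mod_cast hsplit.symm
      rw [this]
      have : ((Finset.univ.filter (fun i => xbar i ≠ 0)).card : ℝ) ≤ s := by
        exact_mod_cast h
      linarith
    · intro i; by_cases hi : xbar i = 0 <;> simp [hi]
  · rintro ⟨y, hy01, hysum, hxy⟩
    have hle : ∑ i, y i ≤ ∑ i, (if xbar i = 0 then (1:ℝ) else 0) := by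
      apply Finset.sum_le_sum
      intro i _
      by_cases hi : xbar i = 0
      · simpa [hi] using (hy01 i).2
      · have : y i = 0 := by
          have := hxy i
          rcases mul_eq_zero.mp this with h | h
          · exact absurd h hi
          · exact h
        simp [hi, this]
    rw [hsum] at hle
    rw [hcard]
    have hc : (n : ℝ) = (Finset.univ.filter (fun i => xbar i = 0)).card
        + (Finset.univ.filter (fun i => xbar i ≠ 0)).card := by
      exact_mod_cast hsplit.symm
    have : ((Finset.univ.filter (fun i => xbar i ≠ 0)).card : ℝ) ≤ s := by
      linarith [hysum, hle, hc]
    exact_mod_cast this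
end

section
/- x̄ ∈ ℝⁿ is a global minimizer of SCNO if and only if there exists ȳ ∈ [0,1]ⁿ such that (x̄, ȳ) is a global minimizer of the relaxed problem: min f(x) s.t. ∑ᵢ yᵢ ≥ n − s, yᵢ ∈ [0,1], xᵢyᵢ = 0 for all i. -/
lemma relax_feas_imp_sparse (n s : ℕ) (x y : Fin n → ℝ)
    (hy : ∀ i, y i ∈ Set.Icc (0 : ℝ) 1)
    (hsum : (n : ℝ) - (s : ℝ) ≤ ∑ i, y i)
    (hxy : ∀ i, x i * y i = 0) :
    Set.ncard {i : Fin n | x i ≠ 0} ≤ s := by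
  classical
  set Z : Finset (Fin n) := Finset.univ.filter (fun i => y i = 0) with hZ
  have hsub : {i : Fin n | x i ≠ 0} ⊆ (Z : Set (Fin n)) := by
    intro i hi
    have := hxy i
    have hyi : y i = 0 := by
      rcases mul_eq_zero.mp this with h | h
      · exact absurd h hi
      · exact h
    simp [hZ, hyi]
  have h1 : Set.ncard {i : Fin n | x i ≠ 0} ≤ Z.card := by
    have := Set.ncard_le_ncard hsub (Set.toFinite _)
    simpa using this
  -- sum bound: ∑ y ≤ n - Z.card
  have h2 : ∑ i, y i ≤ (n : ℝ) - Z.card := by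
    have hsplit : ∑ i, y i = ∑ i ∈ Zᶜ, y i := by
      rw [← Finset.sum_add_sum_compl Z]
      have : ∑ i ∈ Z, y i = 0 := Finset.sum_eq_zero (by
        intro i hi; simpa [hZ] using hi)
      simp [this]
    rw [hsplit]
    calc ∑ i ∈ Zᶜ, y i ≤ ∑ _i ∈ Zᶜ, (1 : ℝ) :=
          Finset.sum_le_sum (fun i _ => (hy i).2)
      _ = (Zᶜ.card : ℝ) := by simp
      _ = (n : ℝ) - Z.card := by
          rw [Finset.card_compl, Fintype.card_fin]
          have := Finset.card_le_univ Z
          have hle : Z.card ≤ n := by simpa using this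
          push_cast [Nat.cast_sub hle]
          norm_cast
  have h3 : (Z.card : ℝ) ≤ s := by linarith
  have h4 : Z.card ≤ s := by exact_mod_cast h3
  omega

lemma sparse_imp_relax_feas (n s : ℕ) (x : Fin n → ℝ)
    (hx : Set.ncard {i : Fin n | x i ≠ 0} ≤ s) :
    ∃ y : Fin n → ℝ, (∀ i, y i ∈ Set.Icc (0 : ℝ) 1) ∧
      (n : ℝ) - (s : ℝ) ≤ ∑ i, y i ∧ (∀ i, x i * y i = 0) := by
  classical
  refine ⟨fun i => if x i = 0 then 1 else 0, ?_, ?_, ?_⟩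
  · intro i; by_cases h : x i = 0 <;> simp [h]
  · have hcard : Set.ncard {i : Fin n | x i ≠ 0} =
        (Finset.univ.filter (fun i => ¬ x i = 0)).card := by
      rw [Set.ncard_eq_toFinset_card']
      congr 1
      ext i; simp
    have hsum : ∑ i, (if x i = 0 then (1 : ℝ) else 0)
        = ((Finset.univ.filter (fun i => x i = 0)).card : ℝ) := by
      simp [Finset.sum_ite]
    rw [hsum]
    have hcompl : (Finset.univ.filter (fun i => x i = 0)).card
        = n - (Finset.univ.filter (fun i => ¬ x i = 0)).card := by
      have := Finset.card_filter_add_card_filter_not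
        (s := (Finset.univ : Finset (Fin n))) (p := fun i => x i = 0)
      simp at this
      omega
    have hle : (Finset.univ.filter (fun i => ¬ x i = 0)).card ≤ s := by
      omega
    have hcardle : (Finset.univ.filter (fun i => x i = 0)).card ≤ n := by
      simpa using Finset.card_le_univ (Finset.univ.filter (fun i => x i = 0))
    rw [hcompl]
    have : (s : ℝ) ≥ ((Finset.univ.filter (fun i => ¬ x i = 0)).card : ℝ) := by
      exact_mod_cast hle
    have hle2 : (Finset.univ.filter (fun i => ¬ x i = 0)).card ≤ n := by
      simpa using Finset.card_le_univ (Finset.univ.filter (fun i => ¬ x i = 0))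
    push_cast [Nat.cast_sub hle2]
    linarith
  · intro i; by_cases h : x i = 0 <;> simp [h]

/-- `x̄` globally solves SCNO iff for some `ȳ` the pair `(x̄, ȳ)` globally
solves the relaxed problem. -/
theorem scno_global_min_iff_relaxation_global_min (n s : ℕ) (hs : s < n)
    (f : (Fin n → ℝ) → ℝ) (hf : ContDiff ℝ 2 f) (xbar : Fin n → ℝ) :
    (Set.ncard {i : Fin n | xbar i ≠ 0} ≤ s ∧
      ∀ x : Fin n → ℝ, Set.ncard {i : Fin n | x i ≠ 0} ≤ s → f xbar ≤ f x) ↔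
    (∃ ybar : Fin n → ℝ,
      ((∀ i, ybar i ∈ Set.Icc (0 : ℝ) 1) ∧
        (n : ℝ) - (s : ℝ) ≤ ∑ i, ybar i ∧
        (∀ i, xbar i * ybar i = 0)) ∧
      ∀ x y : Fin n → ℝ,
        (∀ i, y i ∈ Set.Icc (0 : ℝ) 1) →
        (n : ℝ) - (s : ℝ) ≤ ∑ i, y i →
        (∀ i, x i * y i = 0) →
        f xbar ≤ f x) := by
  constructor
  · rintro ⟨hsp, hmin⟩
    obtain ⟨y, hy1, hy2, hy3⟩ := sparse_imp_relax_feas n s xbar hsp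
    exact ⟨y, ⟨hy1, hy2, hy3⟩, fun x y' h1 h2 h3 =>
      hmin x (relax_feas_imp_sparse n s x y' h1 h2 h3)⟩
  · rintro ⟨y, ⟨hy1, hy2, hy3⟩, hmin⟩
    refine ⟨relax_feas_imp_sparse n s xbar y hy1 hy2 hy3, fun x hx => ?_⟩
    obtain ⟨y', h1, h2, h3⟩ := sparse_imp_relax_feas n s x hx
    exact hmin x y' h1 h2 h3
end

section
/- A feasible point (x̄, ȳ) of the relaxation of SCNO is T-stationary if and only if x̄ is M-stationary for SCNO, i.e. ∂f/∂xᵢ(x̄) = 0 for all i with x̄ᵢ ≠ 0. -/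
open Classical

/-- Feasibility for the relaxation of SCNO. -/
def RelaxFeasible (n s : ℕ) (x y : Fin n → ℝ) : Prop :=
  (∀ i, y i ∈ Set.Icc (0 : ℝ) 1) ∧
  (n : ℝ) - (s : ℝ) ≤ ∑ i, y i ∧
  ∀ i, x i * y i = 0

/-- T-stationarity for the relaxation of SCNO, stated coordinatewise:
the x-components and y-components of the Lagrangian equation
(Df(x̄),0) = μ̄(0,e) − ∑_{I₀₁} μ̄ᵢ(0,eᵢ) + ∑_{I₀≠} σ̄₁,ᵢ(eᵢ,0)
+ ∑_{I₁} σ̄₂,ᵢ(0,eᵢ) + ∑_{I₀₀}(ϱ̄₁,ᵢ(eᵢ,0)+ϱ̄₂,ᵢ(0,eᵢ)),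
together with sign and complementarity conditions. -/
def TStationary (n s : ℕ) (f : (Fin n → ℝ) → ℝ) (x y : Fin n → ℝ) : Prop :=
  ∃ (μ : ℝ) (μI σ₁ σ₂ ϱ₁ ϱ₂ : Fin n → ℝ),
    0 ≤ μ ∧
    (∀ i, x i = 0 ∧ y i = 1 → 0 ≤ μI i) ∧
    (∀ i, fderiv ℝ f x (Pi.single i 1) =
        (if x i = 0 ∧ y i ≠ 0 then σ₁ i else 0) +
        (if x i = 0 ∧ y i = 0 then ϱ₁ i else 0)) ∧
    (∀ i, (0 : ℝ) = μ - (if x i = 0 ∧ y i = 1 then μI i else 0) +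
        (if x i ≠ 0 then σ₂ i else 0) +
        (if x i = 0 ∧ y i = 0 then ϱ₂ i else 0)) ∧
    μ * ((∑ i, if x i = 0 then y i else 0) - ((n : ℝ) - (s : ℝ))) = 0 ∧
    (∀ i, x i = 0 ∧ y i = 0 → (ϱ₁ i = 0 ∨ ϱ₂ i ≤ 0))

/-- A feasible point of the relaxation is T-stationary iff the x-part is
M-stationary for SCNO. -/
theorem tStationary_iff_mStationary (n s : ℕ) (hs : s < n)
    (f : (Fin n → ℝ) → ℝ) (hf : ContDiff ℝ 2 f)
    (xbar ybar : Fin n → ℝ) (hfeas : RelaxFeasible n s xbar ybar) :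
    TStationary n s f xbar ybar ↔
      ∀ i : Fin n, xbar i ≠ 0 → fderiv ℝ f xbar (Pi.single i 1) = 0 := by
  constructor
  · rintro ⟨μ, μI, σ₁, σ₂, ϱ₁, ϱ₂, _, _, hx, _⟩ i hi
    have := hx i
    simp [hi] at this
    exact this
  · intro hM
    refine ⟨0, 0, fun i => fderiv ℝ f xbar (Pi.single i 1),
      0, fun i => fderiv ℝ f xbar (Pi.single i 1), 0,
      le_refl 0, fun i _ => le_refl 0, ?_, ?_, by ring, fun i _ => Or.inr (le_refl 0)⟩
    · intro i
      by_cases hx : xbar i = 0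
      · by_cases hy : ybar i = 0 <;> simp [hx, hy]
      · simp [hx, hM i hx]
    · intro i
      simp
end
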